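/- Let U be a d×k real matrix with Uᵀ U = I_k and P = U Uᵀ, let F be a map from n×d real matrices to n×m real matrices that is L-Lipschitz with respect to the Frobenius norm, and define F_dfa(H) = F(H P). Let Δ be a random n×d real matrix whose distribution is invariant under right multiplication by every d×d orthogonal matrix and which satisfies ‖Δ‖_F ≤ ε almost surely. Then for every fixed matrix H, the expected output deviation satisfies E[‖F_dfa(H + Δ) − F_dfa(H)‖_F] ≤ L·√(k/d)·ε. -/

import Mathlib

open MeasureTheory Matrix

/-- The Frobenius norm of a real matrix: the square root of the sum of squares of all entries. -/
noncomputable def frobNorm {a b : ℕ} (A : Matrix (Fin a) (Fin b) ℝ) : ℝ :=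
  Real.sqrt (∑ i, ∑ j, (A i j) ^ 2)

/-- The product σ-algebra on real matrices (entrywise). -/
instance matrixMeasurableSpace {m n : Type*} : MeasurableSpace (Matrix m n ℝ) :=
  inferInstanceAs (MeasurableSpace (m → n → ℝ))

lemma frobSq_nonneg {a b : ℕ} (A : Matrix (Fin a) (Fin b) ℝ) :
    0 ≤ ∑ i, ∑ j, A i j ^ 2 :=
  Finset.sum_nonneg fun _ _ => Finset.sum_nonneg fun _ _ => sq_nonneg _

lemma frobNorm_sq {a b : ℕ} (A : Matrix (Fin a) (Fin b) ℝ) :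
    frobNorm A ^ 2 = ∑ i, ∑ j, A i j ^ 2 := by
  rw [frobNorm, Real.sq_sqrt (frobSq_nonneg A)]

lemma frobSq_eq_trace {a b : ℕ} (A : Matrix (Fin a) (Fin b) ℝ) :
    ∑ i, ∑ j, A i j ^ 2 = Matrix.trace (A * Aᵀ) := by
  simp [Matrix.trace, Matrix.mul_apply, Matrix.diag, sq]

lemma frobSq_mul_transpose {n' k d : ℕ} (B : Matrix (Fin n') (Fin k) ℝ)
    (U : Matrix (Fin d) (Fin k) ℝ) (hU : Uᵀ * U = 1) :
    ∑ i, ∑ j, ((B * Uᵀ) i j) ^ 2 = ∑ i, ∑ j, B i j ^ 2 := by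
  rw [frobSq_eq_trace, frobSq_eq_trace, Matrix.transpose_mul, Matrix.transpose_transpose,
    show B * Uᵀ * (U * Bᵀ) = B * (Uᵀ * U) * Bᵀ by simp [Matrix.mul_assoc], hU, Matrix.mul_one]

lemma frobNorm_mul_transpose {n' k d : ℕ} (B : Matrix (Fin n') (Fin k) ℝ)
    (U : Matrix (Fin d) (Fin k) ℝ) (hU : Uᵀ * U = 1) :
    frobNorm (B * Uᵀ) = frobNorm B := by
  rw [frobNorm, frobNorm, frobSq_mul_transpose B U hU]

lemma vmv_mul_vmv {d : ℕ} (w : Fin d → ℝ) :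
    vecMulVec w w * vecMulVec w w = (∑ i, w i ^ 2) • vecMulVec w w := by
  ext i j
  simp only [Matrix.mul_apply, Matrix.vecMulVec_apply, Matrix.smul_apply, smul_eq_mul]
  have h : ∀ x : Fin d, w i * w x * (w x * w j) = w x ^ 2 * (w i * w j) := fun x => by ring
  simp_rw [h]
  rw [← Finset.sum_mul]

lemma householder {d : ℕ} (i0 : Fin d) (u : Fin d → ℝ) (hu : ∑ i, u i ^ 2 = 1) :
    ∃ O : Matrix (Fin d) (Fin d) ℝ, Oᵀ * O = 1 ∧ O.mulVec (Pi.single i0 1) = u := by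
  set e0 : Fin d → ℝ := Pi.single i0 1 with he0
  set w : Fin d → ℝ := u - e0 with hwdef
  set s : ℝ := ∑ i, w i ^ 2 with hsdef
  have hsingle_sq : ∑ i : Fin d, e0 i ^ 2 = 1 := by
    simp [he0, Pi.single_apply, sq]
  have hcross : ∑ i : Fin d, u i * e0 i = u i0 := by
    simp [he0, Pi.single_apply]
  have hs : s = 2 - 2 * u i0 := by
    have h : ∀ i, w i ^ 2 = u i ^ 2 - 2 * (u i * e0 i) + e0 i ^ 2 := by
      intro i; simp only [hwdef, Pi.sub_apply]; ring
    rw [hsdef]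
    simp only [h, Finset.sum_add_distrib, Finset.sum_sub_distrib, hu, hsingle_sq,
      ← Finset.mul_sum, hcross]
    ring
  by_cases hs0 : s = 0
  · have hw0 : w = 0 := by
      funext i
      have h2 := (Finset.sum_eq_zero_iff_of_nonneg (fun i _ => sq_nonneg (w i))).1 hs0 i
        (Finset.mem_univ i)
      exact pow_eq_zero_iff two_ne_zero |>.1 h2
    have hu' : u = e0 := sub_eq_zero.1 (by rw [← hwdef, hw0])
    exact ⟨1, by simp, by rw [Matrix.one_mulVec]; exact hu'.symm⟩
  · set c : ℝ := 2 / s with hcdef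
    set W := vecMulVec w w with hWdef
    refine ⟨1 - c • W, ?_, ?_⟩
    · have hWt : (c • W)ᵀ = c • W := by
        rw [Matrix.transpose_smul]; congr 1; ext i j
        simp [hWdef, vecMulVec_apply, mul_comm]
      have hWW : W * W = s • W := vmv_mul_vmv w
      have hcc : c * c * s = c + c := by
        rw [hcdef]; field_simp; ring
      have hexp : (1 - c • W) * (1 - c • W) = 1 := by
        simp only [Matrix.sub_mul, Matrix.mul_sub, Matrix.one_mul, Matrix.mul_one,
          Matrix.smul_mul, Matrix.mul_smul, hWW, smul_smul]
        rw [smul_sub, smul_smul, show c * (c * s) = c * c * s by ring, hcc, add_smul]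
        module
      rw [Matrix.transpose_sub, Matrix.transpose_one, hWt, hexp]
    · have hWv : W.mulVec (Pi.single i0 1) = (w i0) • w := by
        funext i
        simp [hWdef, vecMulVec_apply, Matrix.mulVec, dotProduct, Pi.single_apply, mul_comm,
          Finset.sum_ite_eq']
      rw [Matrix.sub_mulVec, Matrix.one_mulVec, Matrix.smul_mulVec, hWv]
      have hwi0 : w i0 = u i0 - 1 := by simp [hwdef, he0]
      have hs2 : (2 : ℝ) - 2 * u i0 ≠ 0 := hs ▸ hs0
      have hcw : c * (u i0 - 1) = -1 := by
        rw [hcdef, hs, div_mul_eq_mul_div, div_eq_iff hs2]; ring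
      rw [smul_smul, hwi0, hcw]
      funext i
      simp only [Pi.sub_apply, Pi.smul_apply, smul_eq_mul, hwdef, neg_one_mul, neg_sub]
      ring

lemma meas_entry {n' d : ℕ} (i : Fin n') (j : Fin d) :
    Measurable fun A : Matrix (Fin n') (Fin d) ℝ => A i j :=
  (measurable_pi_apply j).comp (measurable_pi_apply i)

lemma meas_mulRight {n' d k : ℕ} (B : Matrix (Fin d) (Fin k) ℝ) :
    Measurable fun A : Matrix (Fin n') (Fin d) ℝ => A * B := by
  apply measurable_pi_lambda
  intro i
  apply measurable_pi_lambda
  intro j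
  simp only [Matrix.mul_apply]
  exact Finset.measurable_sum _ fun l _ => (meas_entry i l).mul_const _

lemma meas_colSq {n' d : ℕ} (v : Fin d → ℝ) :
    Measurable fun A : Matrix (Fin n') (Fin d) ℝ => ∑ i, (A.mulVec v) i ^ 2 := by
  apply Finset.measurable_sum
  intro i _
  have h : Measurable fun A : Matrix (Fin n') (Fin d) ℝ => (A.mulVec v) i := by
    simp only [Matrix.mulVec, dotProduct]
    exact Finset.measurable_sum _ fun j _ => (meas_entry i j).mul_const _
  exact h.pow_const 2

lemma meas_frobSq {n' d : ℕ} :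
    Measurable fun A : Matrix (Fin n') (Fin d) ℝ => ∑ i, ∑ j, A i j ^ 2 :=
  Finset.measurable_sum _ fun i _ =>
    Finset.measurable_sum _ fun j _ => (meas_entry i j).pow_const 2

lemma integrable_of_ae_bound {Ω : Type*} [MeasurableSpace Ω] {μ : Measure Ω}
    [IsFiniteMeasure μ] {h : Ω → ℝ} (hm : AEMeasurable h μ) {C : ℝ}
    (hb : ∀ᵐ ω ∂μ, ‖h ω‖ ≤ C) : Integrable h μ :=
  memLp_one_iff_integrable.1 (MemLp.of_bound hm.aestronglyMeasurable C hb)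

/-- Let `U` have orthonormal columns, `P = U * Uᵀ`, and let `F` be `L`-Lipschitz
in the Frobenius norm, with `F_dfa(H) = F(H P)`. If the distribution of a random matrix `Δ` is
invariant under right multiplication by every orthogonal matrix and `‖Δ‖_F ≤ ε` almost surely,
then for every fixed `H`, `E[‖F_dfa(H + Δ) − F_dfa(H)‖_F] ≤ L · √(k/d) · ε`. -/
theorem dfa_expected_perturbation_bound {n d k m : ℕ} {Ω : Type*} [MeasurableSpace Ω]
    (μ : Measure Ω) [IsProbabilityMeasure μ]
    (U : Matrix (Fin d) (Fin k) ℝ) (hU : Uᵀ * U = 1)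
    (F : Matrix (Fin n) (Fin d) ℝ → Matrix (Fin n) (Fin m) ℝ) (L : ℝ) (hL : 0 ≤ L)
    (hF : ∀ H₁ H₂ : Matrix (Fin n) (Fin d) ℝ, frobNorm (F H₁ - F H₂) ≤ L * frobNorm (H₁ - H₂))
    (Δ : Ω → Matrix (Fin n) (Fin d) ℝ) (hΔ : AEMeasurable Δ μ)
    (hinv : ∀ O : Matrix (Fin d) (Fin d) ℝ, Oᵀ * O = 1 →
      Measure.map (fun ω => Δ ω * O) μ = Measure.map Δ μ)
    (ε : ℝ) (hbound : ∀ᵐ ω ∂μ, frobNorm (Δ ω) ≤ ε) :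
    ∀ H : Matrix (Fin n) (Fin d) ℝ,
      (∫ ω, frobNorm (F ((H + Δ ω) * (U * Uᵀ)) - F (H * (U * Uᵀ))) ∂μ)
        ≤ L * Real.sqrt ((k : ℝ) / d) * ε := by
  intro H
  rcases Nat.eq_zero_or_pos d with hd | hd
  · subst hd
    have heq : ∀ ω, (H + Δ ω) * (U * Uᵀ) = H * (U * Uᵀ) := by
      intro ω; ext i j; exact j.elim0
    have hz : ∀ ω : Ω, frobNorm (F ((H + Δ ω) * (U * Uᵀ)) - F (H * (U * Uᵀ))) = 0 := by
      intro ω; rw [heq ω, sub_self, frobNorm]; simp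
    simp only [hz, integral_zero]
    rw [show ((k : ℝ) / ((0 : ℕ) : ℝ)) = 0 by simp, Real.sqrt_zero, mul_zero, zero_mul]
  · -- main case
    set i0 : Fin d := ⟨0, hd⟩ with hi0
    set e0 : Fin d → ℝ := Pi.single i0 1 with he0
    have hμne : μ ≠ 0 := IsProbabilityMeasure.ne_zero μ
    have : (MeasureTheory.ae μ).NeBot := ae_neBot.2 hμne
    have hεnn : 0 ≤ ε := by
      obtain ⟨ω, hω⟩ := hbound.exists
      exact le_trans (Real.sqrt_nonneg _) hω
    -- Cauchy–Schwarz: column square vs Frobenius square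
    have hCS : ∀ (A : Matrix (Fin n) (Fin d) ℝ) (v : Fin d → ℝ), (∑ j, v j ^ 2 = 1) →
        ∑ i, (A.mulVec v) i ^ 2 ≤ ∑ i, ∑ j, A i j ^ 2 := by
      intro A v hv
      have hstep : ∀ i : Fin n, (A.mulVec v) i ^ 2 ≤ ∑ j, A i j ^ 2 := by
        intro i
        have := Finset.sum_mul_sq_le_sq_mul_sq Finset.univ (fun j => A i j) v
        calc (A.mulVec v) i ^ 2 = (∑ j, A i j * v j) ^ 2 := by
              simp [Matrix.mulVec, dotProduct]
          _ ≤ (∑ j, A i j ^ 2) * (∑ j, v j ^ 2) := this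
          _ = ∑ j, A i j ^ 2 := by rw [hv, mul_one]
      exact Finset.sum_le_sum fun i _ => hstep i
    have hfrob_ae : ∀ᵐ ω ∂μ, ∑ i, ∑ j, (Δ ω) i j ^ 2 ≤ ε ^ 2 := by
      filter_upwards [hbound] with ω hω
      calc ∑ i, ∑ j, (Δ ω) i j ^ 2 = frobNorm (Δ ω) ^ 2 := (frobNorm_sq (Δ ω)).symm
        _ ≤ ε ^ 2 := pow_le_pow_left₀ (Real.sqrt_nonneg _) hω 2
    -- integrability of column moments
    have hInt_colM : ∀ v : Fin d → ℝ, (∑ j, v j ^ 2 = 1) →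
        Integrable (fun ω => ∑ i, ((Δ ω).mulVec v) i ^ 2) μ := by
      intro v hv
      apply integrable_of_ae_bound ((meas_colSq v).comp_aemeasurable hΔ) (C := ε ^ 2)
      filter_upwards [hfrob_ae] with ω hω
      rw [Real.norm_eq_abs, abs_of_nonneg (Finset.sum_nonneg fun _ _ => sq_nonneg _)]
      exact le_trans (hCS (Δ ω) v hv) hω
    -- transfer via isotropy
    have transfer : ∀ v : Fin d → ℝ, (∑ j, v j ^ 2 = 1) →
        ∫ ω, ∑ i, ((Δ ω).mulVec v) i ^ 2 ∂μ = ∫ ω, ∑ i, ((Δ ω).mulVec e0) i ^ 2 ∂μ := by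
      intro v hv
      obtain ⟨O, hO, hOe⟩ := householder i0 v hv
      have hg := meas_colSq (n' := n) e0
      have hAEM : AEMeasurable (fun ω => Δ ω * O) μ := (meas_mulRight O).comp_aemeasurable hΔ
      have hpt : ∀ ω : Ω, (Δ ω * O).mulVec e0 = (Δ ω).mulVec v := by
        intro ω; rw [← Matrix.mulVec_mulVec, he0, hOe]
      calc ∫ ω, ∑ i, ((Δ ω).mulVec v) i ^ 2 ∂μ
          = ∫ ω, ∑ i, ((Δ ω * O).mulVec e0) i ^ 2 ∂μ := by simp_rw [hpt]
        _ = ∫ A, ∑ i, (A.mulVec e0) i ^ 2 ∂(Measure.map (fun ω => Δ ω * O) μ) :=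
            (integral_map hAEM hg.aestronglyMeasurable).symm
        _ = ∫ A, ∑ i, (A.mulVec e0) i ^ 2 ∂(Measure.map Δ μ) := by rw [hinv O hO]
        _ = ∫ ω, ∑ i, ((Δ ω).mulVec e0) i ^ 2 ∂μ := integral_map hΔ hg.aestronglyMeasurable
    set M : ℝ := ∫ ω, ∑ i, ((Δ ω).mulVec e0) i ^ 2 ∂μ with hMdef
    have hsingle_unit : ∀ i : Fin d, ∑ l : Fin d, (Pi.single i 1 : Fin d → ℝ) l ^ 2 = 1 := by
      intro i; simp [Pi.single_apply, sq]
    have hsum_cols : ∀ A : Matrix (Fin n) (Fin d) ℝ,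
        ∑ i : Fin d, ∑ r, (A.mulVec (Pi.single i 1)) r ^ 2 = ∑ r, ∑ j, A r j ^ 2 := by
      intro A
      rw [Finset.sum_comm]
      refine Finset.sum_congr rfl fun r _ => Finset.sum_congr rfl fun i _ => ?_
      congr 1
      simp [Matrix.mulVec_single]
    have hdM : (d : ℝ) * M = ∫ ω, ∑ r, ∑ j, (Δ ω) r j ^ 2 ∂μ := by
      have hcols : ∀ i : Fin d,
          ∫ ω, ∑ r, ((Δ ω).mulVec (Pi.single i 1)) r ^ 2 ∂μ = M :=
        fun i => transfer _ (hsingle_unit i)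
      calc (d : ℝ) * M
          = ∑ _i : Fin d, M := by
            rw [Finset.sum_const, Finset.card_univ, Fintype.card_fin, nsmul_eq_mul]
        _ = ∑ i : Fin d, ∫ ω, ∑ r, ((Δ ω).mulVec (Pi.single i 1)) r ^ 2 ∂μ :=
            (Finset.sum_congr rfl fun i _ => (hcols i).symm)
        _ = ∫ ω, ∑ i : Fin d, ∑ r, ((Δ ω).mulVec (Pi.single i 1)) r ^ 2 ∂μ :=
            (integral_finset_sum _ fun i _ => hInt_colM _ (hsingle_unit i)).symm
        _ = ∫ ω, ∑ r, ∑ j, (Δ ω) r j ^ 2 ∂μ :=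
            integral_congr_ae (Filter.Eventually.of_forall fun ω => hsum_cols (Δ ω))
    have hInt_frobSq : Integrable (fun ω => ∑ r, ∑ j, (Δ ω) r j ^ 2) μ := by
      apply integrable_of_ae_bound (meas_frobSq.comp_aemeasurable hΔ) (C := ε ^ 2)
      filter_upwards [hfrob_ae] with ω hω
      simp only [Function.comp_apply]
      rw [Real.norm_eq_abs, abs_of_nonneg (frobSq_nonneg (Δ ω))]
      exact hω
    have hd' : (0 : ℝ) < (d : ℝ) := by exact_mod_cast hd
    have hM_le : M ≤ ε ^ 2 / d := by
      rw [le_div_iff₀ hd']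
      have hmono : ∫ ω, ∑ r, ∑ j, (Δ ω) r j ^ 2 ∂μ ≤ ∫ _ω, ε ^ 2 ∂μ :=
        integral_mono_ae hInt_frobSq (integrable_const _) hfrob_ae
      have hconst : ∫ _ω, ε ^ 2 ∂μ = ε ^ 2 := by simp
      calc M * d = (d : ℝ) * M := mul_comm M _
        _ = ∫ ω, ∑ r, ∑ j, (Δ ω) r j ^ 2 ∂μ := hdM
        _ ≤ ε ^ 2 := hconst ▸ hmono
    have hM_nonneg : 0 ≤ M :=
      integral_nonneg fun ω => Finset.sum_nonneg fun _ _ => sq_nonneg _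
    -- columns of U are unit vectors
    have hUcol : ∀ j : Fin k, ∑ i, (U i j) ^ 2 = 1 := by
      intro j
      have h1 : (Uᵀ * U) j j = 1 := by rw [hU]; simp [Matrix.one_apply]
      calc ∑ i, (U i j) ^ 2 = (Uᵀ * U) j j := by
            simp [Matrix.mul_apply, Matrix.transpose_apply, sq]
        _ = 1 := h1
    have hdec : ∀ A : Matrix (Fin n) (Fin d) ℝ,
        ∑ i, ∑ j, (A * U) i j ^ 2 = ∑ j : Fin k, ∑ i, (A.mulVec (fun l => U l j)) i ^ 2 := by
      intro A
      rw [Finset.sum_comm]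
      refine Finset.sum_congr rfl fun j _ => Finset.sum_congr rfl fun i _ => ?_
      congr 1
    have hq : ∫ ω, ∑ i, ∑ j, ((Δ ω) * U) i j ^ 2 ∂μ = (k : ℝ) * M := by
      calc ∫ ω, ∑ i, ∑ j, ((Δ ω) * U) i j ^ 2 ∂μ
          = ∫ ω, ∑ j : Fin k, ∑ i, ((Δ ω).mulVec (fun l => U l j)) i ^ 2 ∂μ :=
            integral_congr_ae (Filter.Eventually.of_forall fun ω => hdec (Δ ω))
        _ = ∑ j : Fin k, ∫ ω, ∑ i, ((Δ ω).mulVec (fun l => U l j)) i ^ 2 ∂μ :=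
            integral_finset_sum _ fun j _ => hInt_colM _ (hUcol j)
        _ = ∑ _j : Fin k, M := Finset.sum_congr rfl fun j _ => transfer _ (hUcol j)
        _ = (k : ℝ) * M := by
            rw [Finset.sum_const, Finset.card_univ, Fintype.card_fin, nsmul_eq_mul]
    -- the key random variable
    set f : Ω → ℝ := fun ω => frobNorm (Δ ω * U) with hfdef
    have hf_meas : AEMeasurable f μ :=
      ((Real.continuous_sqrt.measurable.comp (meas_frobSq.comp (meas_mulRight U))).comp_aemeasurable hΔ : AEMeasurable (fun ω => frobNorm (Δ ω * U)) μ)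
    have hf_nonneg : ∀ ω, 0 ≤ f ω := fun ω => Real.sqrt_nonneg _
    have hfsq : ∀ ω, f ω ^ 2 = ∑ i, ∑ j, ((Δ ω) * U) i j ^ 2 := fun ω => frobNorm_sq _
    have hf_bound : ∀ᵐ ω ∂μ, ‖f ω‖ ≤ Real.sqrt ((k : ℝ) * ε ^ 2) := by
      filter_upwards [hfrob_ae] with ω hω
      rw [Real.norm_eq_abs, abs_of_nonneg (hf_nonneg ω)]
      apply Real.sqrt_le_sqrt
      calc ∑ i, ∑ j, ((Δ ω) * U) i j ^ 2
          = ∑ j : Fin k, ∑ i, ((Δ ω).mulVec (fun l => U l j)) i ^ 2 := hdec (Δ ω)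
        _ ≤ ∑ _j : Fin k, ε ^ 2 :=
            Finset.sum_le_sum fun j _ => le_trans (hCS (Δ ω) _ (hUcol j)) hω
        _ = (k : ℝ) * ε ^ 2 := by
            rw [Finset.sum_const, Finset.card_univ, Fintype.card_fin, nsmul_eq_mul]
    have hf2 : MemLp f 2 μ := MemLp.of_bound hf_meas.aestronglyMeasurable _ hf_bound
    have hf_int : Integrable f μ := integrable_of_ae_bound hf_meas hf_bound
    have hvar : (∫ ω, f ω ∂μ) ^ 2 ≤ ∫ ω, f ω ^ 2 ∂μ := by
      have h := ProbabilityTheory.variance_nonneg f μ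
      rw [ProbabilityTheory.variance_eq_sub hf2] at h
      have hpow : (∫ x, (f ^ 2) x ∂μ) = ∫ ω, f ω ^ 2 ∂μ :=
        integral_congr_ae (Filter.Eventually.of_forall fun ω => by simp)
      rw [hpow] at h
      linarith
    have hEf : ∫ ω, f ω ∂μ ≤ Real.sqrt ((k : ℝ) / d) * ε := by
      have h1 : ∫ ω, f ω ^ 2 ∂μ = (k : ℝ) * M := by
        simp_rw [hfsq]; exact hq
      have h2 : (∫ ω, f ω ∂μ) ^ 2 ≤ ((k : ℝ) / d) * ε ^ 2 := by
        calc (∫ ω, f ω ∂μ) ^ 2 ≤ (k : ℝ) * M := h1 ▸ hvar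
          _ ≤ (k : ℝ) * (ε ^ 2 / d) := by
              exact mul_le_mul_of_nonneg_left hM_le (Nat.cast_nonneg k)
          _ = ((k : ℝ) / d) * ε ^ 2 := by ring
      have h3 : 0 ≤ ∫ ω, f ω ∂μ := integral_nonneg hf_nonneg
      have h4 : ∫ ω, f ω ∂μ ≤ Real.sqrt (((k : ℝ) / d) * ε ^ 2) :=
        Real.le_sqrt_of_sq_le h2
      calc ∫ ω, f ω ∂μ ≤ Real.sqrt (((k : ℝ) / d) * ε ^ 2) := h4
        _ = Real.sqrt ((k : ℝ) / d) * ε := by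
            rw [Real.sqrt_mul (by positivity), Real.sqrt_sq hεnn]
    -- pointwise Lipschitz bound
    have hpw : ∀ ω : Ω, frobNorm (F ((H + Δ ω) * (U * Uᵀ)) - F (H * (U * Uᵀ))) ≤ L * f ω := by
      intro ω
      have h1 := hF ((H + Δ ω) * (U * Uᵀ)) (H * (U * Uᵀ))
      have h2 : (H + Δ ω) * (U * Uᵀ) - H * (U * Uᵀ) = (Δ ω * U) * Uᵀ := by
        rw [Matrix.add_mul, add_sub_cancel_left, Matrix.mul_assoc]
      rw [h2, frobNorm_mul_transpose _ U hU] at h1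
      exact h1
    calc ∫ ω, frobNorm (F ((H + Δ ω) * (U * Uᵀ)) - F (H * (U * Uᵀ))) ∂μ
        ≤ ∫ ω, L * f ω ∂μ := by
          refine integral_mono_of_nonneg
            (Filter.Eventually.of_forall fun ω => Real.sqrt_nonneg _)
            (hf_int.const_mul L) (Filter.Eventually.of_forall fun ω => hpw ω)
      _ = L * ∫ ω, f ω ∂μ := integral_const_mul L f
      _ ≤ L * (Real.sqrt ((k : ℝ) / d) * ε) := mul_le_mul_of_nonneg_left hEf hL
      _ = L * Real.sqrt ((k : ℝ) / d) * ε := (mul_assoc _ _ _).symm
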